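/- Let n ∈ ℕ and let V be a nonempty finite set of vectors in {0,1}^{2n}. Then there exists a vector c ∈ {0,1}^{2n} with δ(c,v) ≤ n for every v ∈ V, if and only if there exist x ∈ V and a vector c' ∈ {0,1}^{2n} such that δ(c',x) = n and δ(c',v) ≤ n for every v ∈ V. -/

import Mathlib

/-- There is a center `c ∈ {0,1}^{2n}` within Hamming distance `n` of every vector of a
nonempty finite set `V` iff there are `x ∈ V` and a center `c'` at Hamming distance
exactly `n` from `x` and within distance `n` of every vector of `V`. -/
theorem minimum_radius_farthest_point (n : ℕ) (V : Finset (Fin (2 * n) → Bool))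
    (hV : V.Nonempty) :
    (∃ c : Fin (2 * n) → Bool, ∀ v ∈ V, hammingDist c v ≤ n) ↔
      (∃ x ∈ V, ∃ c' : Fin (2 * n) → Bool,
        hammingDist c' x = n ∧ ∀ v ∈ V, hammingDist c' v ≤ n) := by
  constructor
  · rintro ⟨c, hc⟩
    obtain ⟨x, hx, hxmax⟩ := V.exists_max_image (fun v => hammingDist c v) hV
    set d := hammingDist c x with hd
    have hdn : d ≤ n := hc x hx
    have hDcard : (Finset.univ.filter fun i : Fin (2*n) => c i ≠ x i).card = d := rfl
    have hA : (Finset.univ.filter fun i : Fin (2*n) => c i = x i).card = 2*n - d := by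
      have := Finset.card_filter_add_card_filter_not
        (s := (Finset.univ : Finset (Fin (2*n)))) (p := fun i => c i = x i)
      simp only [Finset.card_univ, Fintype.card_fin] at this
      have h2 : (Finset.univ.filter fun i : Fin (2*n) => ¬ c i = x i).card = d := hDcard
      omega
    obtain ⟨S, hSsub, hScard⟩ := Finset.exists_subset_card_eq
      (s := Finset.univ.filter fun i : Fin (2*n) => c i = x i) (n := n - d) (by omega)
    set c' : Fin (2*n) → Bool := fun i => if i ∈ S then !(c i) else c i with hc'
    have hmemS : ∀ i ∈ S, c i = x i := fun i hi => by
      have := hSsub hi; simpa using this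
    have hfilter : (Finset.univ.filter fun i : Fin (2*n) => c' i ≠ x i)
        = S ∪ (Finset.univ.filter fun i : Fin (2*n) => c i ≠ x i) := by
      ext i
      simp only [Finset.mem_filter, Finset.mem_union, Finset.mem_univ, true_and, hc']
      by_cases hi : i ∈ S
      · simp [hi, hmemS i hi]
      · simp [hi]
    have hdisj : Disjoint S (Finset.univ.filter fun i : Fin (2*n) => c i ≠ x i) := by
      rw [Finset.disjoint_left]
      intro i hi hi'
      simp only [Finset.mem_filter] at hi'
      exact hi'.2 (hmemS i hi)
    have hdistx : hammingDist c' x = n := by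
      show (Finset.univ.filter fun i : Fin (2*n) => c' i ≠ x i).card = n
      rw [hfilter, Finset.card_union_of_disjoint hdisj, hScard, hDcard]
      omega
    have hdistcc' : hammingDist c' c = n - d := by
      show (Finset.univ.filter fun i : Fin (2*n) => c' i ≠ c i).card = n - d
      have : (Finset.univ.filter fun i : Fin (2*n) => c' i ≠ c i) = S := by
        ext i
        simp only [Finset.mem_filter, Finset.mem_univ, true_and, hc']
        by_cases hi : i ∈ S <;> simp [hi]
      rw [this, hScard]
    refine ⟨x, hx, c', hdistx, fun v hv => ?_⟩
    calc hammingDist c' v ≤ hammingDist c' c + hammingDist c v := hammingDist_triangle _ _ _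
      _ ≤ (n - d) + d := by
          rw [hdistcc']
          exact Nat.add_le_add_left (hxmax v hv) _
      _ = n := by omega
  · rintro ⟨x, hx, c', h1, h2⟩
    exact ⟨c', h2⟩
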